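/- Subset Gaussian cloning has an independent Gaussian law: let N, M, T ≥ 1 be integers, μ ∈ ℝ^N, and let Δ_1, …, Δ_T be a fixed sequence of subsets of {1,…,N} such that every i ∈ {1,…,N} belongs to at most M of the sets Δ_t. On a probability space let Z_1,…,Z_N be i.i.d. N(0,1) and let (G_i^j)_{i ∈ [N], j ∈ [M]} be i.i.d. N(0,M), with all of these random variables mutually independent. Set Ḡ_i = (1/M)·Σ_{j=1}^M G_i^j and, for each t, b_i^t = #{t' ≤ t : i ∈ Δ_{t'}}. Define, for each t ∈ {1,…,T}, the random vector X_t = (μ_i + Z_i + G_i^{b_i^t} − Ḡ_i)_{i ∈ Δ_t}. Then the vectors X_1, …, X_T are mutually independent, and for each t the vector X_t is Gaussian with mean (μ_i)_{i ∈ Δ_t} and covariance M·Id; equivalently, the joint law of the family (X_{t,i})_{t ∈ [T], i ∈ Δ_t} is the product over pairs (t, i) with i ∈ Δ_t of the Gaussian measure on ℝ with mean μ_i and variance M. -/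

import Mathlib

open MeasureTheory ProbabilityTheory Finset

namespace Stmt16Aux

open Real ENNReal

theorem lintegral_fin_pi_prod {n : ℕ} {E : Fin n → Type*} [∀ i, MeasurableSpace (E i)]
    (μ : ∀ i, Measure (E i)) [∀ i, SigmaFinite (μ i)]
    (f : ∀ i, E i → ℝ≥0∞) (hf : ∀ i, Measurable (f i)) :
    ∫⁻ x, ∏ i, f i (x i) ∂Measure.pi μ = ∏ i, ∫⁻ x, f i x ∂μ i := by
  induction n with
  | zero => simp
  | succ n ih =>
    have hmp := (measurePreserving_piFinSuccAbove μ 0).symm (MeasurableEquiv.piFinSuccAbove E 0)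
    rw [← hmp.lintegral_comp (f := fun x => ∏ i, f i (x i))
      (by exact Finset.measurable_prod _ fun i _ => (hf i).comp (measurable_pi_apply i))]
    simp_rw [MeasurableEquiv.piFinSuccAbove_symm_apply, Fin.insertNthEquiv,
      Fin.insertNth_zero, Equiv.coe_fn_mk, Fin.prod_univ_succ, Fin.cons_zero, Fin.cons_succ,
      Fin.zero_succAbove]
    change ∫⁻ a : E 0 × ((j : Fin n) → E j.succ), f 0 a.1 * ∏ x : Fin n, f x.succ (a.2 x)
      ∂((μ 0).prod (Measure.pi fun j => μ j.succ)) = _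
    rw [lintegral_prod_mul (f := f 0) (g := fun b : ((j : Fin n) → E j.succ) => ∏ i : Fin n, f i.succ (b i))
      (hf 0).aemeasurable
      (Finset.measurable_prod _ fun i _ => (hf i.succ).comp
        (measurable_pi_apply i)).aemeasurable]
    rw [ih (fun i => μ i.succ) (fun i => f i.succ) (fun i => hf i.succ)]

theorem lintegral_fintype_pi_prod {ι : Type*} [Fintype ι] {E : ι → Type*}
    [∀ i, MeasurableSpace (E i)] (μ : ∀ i, Measure (E i)) [∀ i, SigmaFinite (μ i)]
    (f : ∀ i, E i → ℝ≥0∞) (hf : ∀ i, Measurable (f i)) :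
    ∫⁻ x, ∏ i, f i (x i) ∂Measure.pi μ = ∏ i, ∫⁻ x, f i x ∂μ i := by
  let e := (Fintype.equivFin ι).symm
  rw [← (measurePreserving_piCongrLeft μ e).lintegral_comp
    (by exact Finset.measurable_prod _ fun i _ => (hf i).comp (measurable_pi_apply i))]
  simp_rw [← e.prod_comp, MeasurableEquiv.coe_piCongrLeft, Equiv.piCongrLeft_apply_apply]
  rw [lintegral_fin_pi_prod _ _ (fun i => hf (e i))]

theorem pi_withDensity {ι : Type*} [Fintype ι] (f : ι → ℝ → ℝ≥0∞) (hf : ∀ i, Measurable (f i))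
    (hsf : ∀ i, SigmaFinite ((volume : Measure ℝ).withDensity (f i))) :
    Measure.pi (fun i => (volume : Measure ℝ).withDensity (f i)) =
      (volume : Measure (ι → ℝ)).withDensity (fun x => ∏ i, f i (x i)) := by
  refine Measure.pi_eq fun s hs => ?_
  rw [withDensity_apply _ (MeasurableSet.univ_pi hs),
    ← lintegral_indicator (MeasurableSet.univ_pi hs) _]
  have hind : ∀ x : ι → ℝ, (Set.pi Set.univ s).indicator (fun x => ∏ i, f i (x i)) x
      = ∏ i, (s i).indicator (f i) (x i) := by
    intro x
    by_cases hx : x ∈ Set.pi Set.univ s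
    · rw [Set.indicator_of_mem hx]
      exact Finset.prod_congr rfl fun i _ => (Set.indicator_of_mem (hx i (Set.mem_univ i)) _).symm
    · rw [Set.indicator_of_notMem hx]
      have : ∃ i, x i ∉ s i := by simpa [Set.mem_pi] using hx
      obtain ⟨i, hi⟩ := this
      exact (Finset.prod_eq_zero (Finset.mem_univ i) (Set.indicator_of_notMem hi _)).symm
  simp_rw [hind]
  rw [volume_pi, lintegral_fintype_pi_prod _ _ (fun i => (hf i).indicator (hs i))]
  exact Finset.prod_congr rfl fun i _ => by
    rw [lintegral_indicator (hs i) _, withDensity_apply _ (hs i)]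

theorem map_volume_of_involutive_linear {ι : Type*} [Fintype ι] [DecidableEq ι]
    (L : (ι → ℝ) →ₗ[ℝ] (ι → ℝ)) (h : ∀ x, L (L x) = x) :
    Measure.map L (volume : Measure (ι → ℝ)) = volume := by
  have hdet : LinearMap.det L * LinearMap.det L = 1 := by
    rw [← LinearMap.det_comp]
    have hc : L.comp L = LinearMap.id := LinearMap.ext h
    rw [hc, LinearMap.det_id]
  have habs : |LinearMap.det L| = 1 := by
    rcases mul_self_eq_one_iff.mp hdet with h1 | h1 <;> simp [h1]
  rw [Real.map_linearMap_volume_pi_eq_smul_volume_pi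
    (by intro h0; rw [h0] at hdet; simp at hdet)]
  rw [abs_inv, habs]
  simp

theorem map_withDensity_of_involutive {ι : Type*} [Fintype ι] {σ : (ι → ℝ) → (ι → ℝ)}
    (hσinv : Function.Involutive σ) (hσm : Measurable σ)
    (hσvol : Measure.map σ (volume : Measure (ι → ℝ)) = volume)
    (ρ : (ι → ℝ) → ℝ≥0∞) (hρ : Measurable ρ) :
    ((volume : Measure (ι → ℝ)).withDensity ρ).map σ
      = (volume : Measure (ι → ℝ)).withDensity (fun x => ρ (σ x)) := by
  ext s hs
  rw [Measure.map_apply hσm hs, withDensity_apply _ (hσm hs), withDensity_apply _ hs]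
  have h1 := setLIntegral_map (μ := (volume : Measure (ι → ℝ)))
    (f := fun x => ρ (σ x)) (g := σ) hs (hρ.comp hσm) hσm
  rw [hσvol] at h1
  simp_rw [hσinv _] at h1
  exact h1.symm

theorem pi_map_eval {ι κ : Type*} [Fintype ι] [Fintype κ]
    (ν : ι → Measure ℝ) [∀ i, IsProbabilityMeasure (ν i)]
    (e : κ → ι) (he : Function.Injective e) (c : κ → ℝ) :
    (Measure.pi ν).map (fun f (p : κ) => c p + f (e p))
      = Measure.pi (fun p => (ν (e p)).map (fun x => c p + x)) := by
  classical
  haveI : ∀ p, IsProbabilityMeasure ((ν (e p)).map (fun x => c p + x)) :=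
    fun p => Measure.isProbabilityMeasure_map (measurable_const_add _).aemeasurable
  refine (Measure.pi_eq fun s hs => ?_).symm
  have hmeas : Measurable (fun (f : ι → ℝ) (p : κ) => c p + f (e p)) :=
    measurable_pi_lambda _ fun p => (measurable_pi_apply (e p)).const_add _
  rw [Measure.map_apply hmeas (MeasurableSet.univ_pi hs)]
  set s' : ι → Set ℝ := fun i => ⋂ (p : κ) (_ : e p = i), (fun x => c p + x) ⁻¹' s p with hs'
  have hpre : (fun (f : ι → ℝ) (p : κ) => c p + f (e p)) ⁻¹' Set.pi Set.univ s
      = Set.pi Set.univ s' := by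
    ext f
    simp only [Set.mem_preimage, Set.mem_pi, Set.mem_univ, forall_true_left, hs',
      Set.mem_iInter]
    constructor
    · intro hf i p hp; subst hp; exact hf p
    · intro hf p; exact hf (e p) p rfl
  rw [hpre, Measure.pi_pi]
  have h1 : ∀ p : κ, s' (e p) = (fun x => c p + x) ⁻¹' s p := by
    intro p
    ext x
    simp only [hs', Set.mem_iInter, Set.mem_preimage]
    constructor
    · intro h; exact h p rfl
    · intro h q hq
      obtain rfl : q = p := he hq
      exact h
  have h2 : ∀ i ∈ (Finset.univ : Finset ι), i ∉ Finset.univ.image e → ν i (s' i) = 1 := by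
    intro i _ hi
    have : s' i = Set.univ := by
      ext x
      simp only [hs', Set.mem_iInter, Set.mem_univ, iff_true]
      intro p hp
      exact absurd (hp ▸ Finset.mem_image_of_mem e (Finset.mem_univ p)) hi
    rw [this]
    exact measure_univ
  calc ∏ i, ν i (s' i) = ∏ i ∈ Finset.univ.image e, ν i (s' i) :=
        (Finset.prod_subset (Finset.subset_univ _) h2).symm
    _ = ∏ p, ν (e p) (s' (e p)) := Finset.prod_image (fun a _ b _ h => he h)
    _ = ∏ p, ((ν (e p)).map (fun x => c p + x)) (s p) := by
        refine Finset.prod_congr rfl fun p _ => ?_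
        rw [h1 p, Measure.map_apply (measurable_const_add _) (hs p)]

variable {N M : ℕ}

/-- The per-site involution on the joint space: replaces `z` by the block average and
re-centers the block around `z`. -/
noncomputable def sigmaFun (N M : ℕ) :
    ((Fin N ⊕ (Fin N × Fin M)) → ℝ) → ((Fin N ⊕ (Fin N × Fin M)) → ℝ) := fun f idx =>
  match idx with
  | .inl i => (∑ j, f (.inr (i, j))) / (M : ℝ)
  | .inr (i, j) => f (.inr (i, j)) - (∑ j', f (.inr (i, j'))) / (M : ℝ) + f (.inl i)

lemma sigmaFun_inl (f : (Fin N ⊕ (Fin N × Fin M)) → ℝ) (i : Fin N) :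
    sigmaFun N M f (.inl i) = (∑ j, f (.inr (i, j))) / (M : ℝ) := rfl

lemma sigmaFun_inr (f : (Fin N ⊕ (Fin N × Fin M)) → ℝ) (i : Fin N) (j : Fin M) :
    sigmaFun N M f (.inr (i, j))
      = f (.inr (i, j)) - (∑ j', f (.inr (i, j'))) / (M : ℝ) + f (.inl i) := rfl

lemma sigmaFun_sum (f : (Fin N ⊕ (Fin N × Fin M)) → ℝ) (i : Fin N) :
    ∑ j, sigmaFun N M f (.inr (i, j))
      = (∑ j, f (.inr (i, j))) - M * ((∑ j, f (.inr (i, j))) / (M : ℝ)) + M * f (.inl i) := by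
  simp only [sigmaFun_inr]
  rw [Finset.sum_add_distrib, Finset.sum_sub_distrib, Finset.sum_const, Finset.card_univ,
    Fintype.card_fin, nsmul_eq_mul, Finset.sum_const, Finset.card_univ, Fintype.card_fin,
    nsmul_eq_mul]

lemma sigmaFun_involutive (hM : 0 < M) : Function.Involutive (sigmaFun N M) := by
  intro f
  have hMne : (M : ℝ) ≠ 0 := Nat.cast_ne_zero.mpr hM.ne'
  funext idx
  rcases idx with i | ⟨i, j⟩
  · rw [sigmaFun_inl, sigmaFun_sum]
    field_simp
    ring
  · rw [sigmaFun_inr, sigmaFun_inl, sigmaFun_sum, sigmaFun_inr]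
    field_simp
    ring

lemma sigmaFun_measurable : Measurable (sigmaFun N M) := by
  refine measurable_pi_lambda _ fun idx => ?_
  rcases idx with i | ⟨i, j⟩
  · simp only [sigmaFun_inl]
    exact (Finset.measurable_sum Finset.univ
      fun j _ => measurable_pi_apply (Sum.inr (i, j))).div_const _
  · simp only [sigmaFun_inr]
    exact (((measurable_pi_apply (Sum.inr (i, j))).sub
      ((Finset.measurable_sum Finset.univ
        fun j' _ => measurable_pi_apply (Sum.inr (i, j'))).div_const _)).add
      (measurable_pi_apply (Sum.inl i)))

lemma sigmaFun_linear (hM : 0 < M) :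
    ∃ L : ((Fin N ⊕ (Fin N × Fin M)) → ℝ) →ₗ[ℝ] ((Fin N ⊕ (Fin N × Fin M)) → ℝ),
      ⇑L = sigmaFun N M := by
  refine ⟨⟨⟨sigmaFun N M, ?_⟩, ?_⟩, rfl⟩
  · intro f g
    funext idx
    rcases idx with i | ⟨i, j⟩
    · simp only [Pi.add_apply, sigmaFun_inl, Finset.sum_add_distrib]
      ring
    · simp only [Pi.add_apply, sigmaFun_inr, Finset.sum_add_distrib]
      ring
  · intro c f
    funext idx
    rcases idx with i | ⟨i, j⟩
    · simp only [Pi.smul_apply, smul_eq_mul, sigmaFun_inl, ← Finset.mul_sum,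
        RingHom.id_apply, div_eq_mul_inv]
      ring
    · simp only [Pi.smul_apply, smul_eq_mul, sigmaFun_inr, ← Finset.mul_sum,
        RingHom.id_apply, div_eq_mul_inv]
      ring

lemma sigmaFun_map_volume (hM : 0 < M) :
    Measure.map (sigmaFun N M) (volume : Measure ((Fin N ⊕ (Fin N × Fin M)) → ℝ)) = volume := by
  obtain ⟨L, hL⟩ := sigmaFun_linear (N := N) hM
  rw [← hL]
  exact map_volume_of_involutive_linear L (fun x => by
    have := sigmaFun_involutive (N := N) hM x
    rw [← hL] at this
    exact this)

noncomputable def pdfFam (N M : ℕ) : (Fin N ⊕ (Fin N × Fin M)) → ℝ → ℝ≥0∞ := fun idx =>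
  Sum.elim (fun _ => gaussianPDF 0 1) (fun _ => gaussianPDF 0 (M : NNReal)) idx

lemma pdfFam_measurable (idx : Fin N ⊕ (Fin N × Fin M)) : Measurable (pdfFam N M idx) := by
  rcases idx with i | p <;> exact measurable_gaussianPDF _ _

lemma key_real (hM : 0 < M) (z : ℝ) (g : Fin M → ℝ) :
    gaussianPDFReal 0 1 ((∑ j, g j) / (M:ℝ)) *
      ∏ j, gaussianPDFReal 0 (M : NNReal) (g j - (∑ j', g j') / (M:ℝ) + z)
    = gaussianPDFReal 0 1 z * ∏ j, gaussianPDFReal 0 (M : NNReal) (g j) := by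
  have hMne : (M : ℝ) ≠ 0 := Nat.cast_ne_zero.mpr hM.ne'
  simp only [gaussianPDFReal, sub_zero, NNReal.coe_natCast, NNReal.coe_one]
  rw [Finset.prod_mul_distrib, Finset.prod_mul_distrib, Finset.prod_const,
    ← Real.exp_sum, ← Real.exp_sum]
  have hterm : ∀ j : Fin M, -(g j - (∑ j', g j') / (M:ℝ) + z)^2 / (2*(M:ℝ))
      = -(g j)^2/(2*(M:ℝ)) + ((-(2*(z - (∑ j', g j')/(M:ℝ))) / (2*(M:ℝ))) * g j
        + -((z - (∑ j', g j')/(M:ℝ))^2)/(2*(M:ℝ))) := by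
    intro j; ring
  rw [Finset.sum_congr rfl fun j _ => hterm j, Finset.sum_add_distrib, Finset.sum_add_distrib,
    ← Finset.mul_sum, Finset.sum_const, Finset.card_univ, Fintype.card_fin, nsmul_eq_mul]
  rw [show -z^2/(2*(1:ℝ)) = -((∑ j', g j')/(M:ℝ))^2/(2*(1:ℝ))
      + ((-(2*(z - (∑ j', g j')/(M:ℝ))) / (2*(M:ℝ))) * (∑ j', g j')
        + (M:ℝ) * (-((z - (∑ j', g j')/(M:ℝ))^2)/(2*(M:ℝ)))) from by field_simp; ring]
  rw [Real.exp_add, Real.exp_add, Real.exp_add, Real.exp_add]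
  ring

lemma key_pdf (hM : 0 < M) (z : ℝ) (g : Fin M → ℝ) :
    gaussianPDF 0 1 ((∑ j, g j)/(M:ℝ)) *
      ∏ j, gaussianPDF 0 (M:NNReal) (g j - (∑ j', g j')/(M:ℝ) + z)
    = gaussianPDF 0 1 z * ∏ j, gaussianPDF 0 (M:NNReal) (g j) := by
  simp only [gaussianPDF]
  rw [← ENNReal.ofReal_prod_of_nonneg (fun j _ => gaussianPDFReal_nonneg _ _ _),
    ← ENNReal.ofReal_prod_of_nonneg (fun j _ => gaussianPDFReal_nonneg _ _ _),
    ← ENNReal.ofReal_mul (gaussianPDFReal_nonneg _ _ _),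
    ← ENNReal.ofReal_mul (gaussianPDFReal_nonneg _ _ _), key_real hM]

lemma rho_invariant (hM : 0 < M) (f : (Fin N ⊕ (Fin N × Fin M)) → ℝ) :
    ∏ idx, pdfFam N M idx (sigmaFun N M f idx) = ∏ idx, pdfFam N M idx (f idx) := by
  rw [Fintype.prod_sum_type, Fintype.prod_sum_type, Fintype.prod_prod_type,
    Fintype.prod_prod_type, ← Finset.prod_mul_distrib, ← Finset.prod_mul_distrib]
  refine Finset.prod_congr rfl fun i _ => ?_
  simp only [pdfFam, Sum.elim_inl, Sum.elim_inr, sigmaFun_inl, sigmaFun_inr]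
  exact key_pdf hM (f (Sum.inl i)) (fun j => f (Sum.inr (i, j)))

lemma e_injective {T N M : ℕ} (hM : 0 < M) (Δ : Fin T → Finset (Fin N))
    (hΔ : ∀ i : Fin N, (Finset.univ.filter (fun t => i ∈ Δ t)).card ≤ M) :
    Function.Injective (fun p : {q : Fin T × Fin N // q.2 ∈ Δ q.1} =>
      (Sum.inr (p.1.2, (⟨((Finset.univ.filter
          (fun t' : Fin T => t' ≤ p.1.1 ∧ p.1.2 ∈ Δ t')).card - 1) % M,
        Nat.mod_lt _ hM⟩ : Fin M)) : Fin N ⊕ (Fin N × Fin M))) := by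
  have bound : ∀ (i : Fin N) (a : Fin T), i ∈ Δ a →
      1 ≤ (Finset.univ.filter (fun t'' : Fin T => t'' ≤ a ∧ i ∈ Δ t'')).card ∧
      (Finset.univ.filter (fun t'' : Fin T => t'' ≤ a ∧ i ∈ Δ t'')).card ≤ M := by
    intro i a hma
    constructor
    · exact Finset.card_pos.mpr ⟨a, by simp [hma]⟩
    · exact (Finset.card_le_card (fun x hx => by
        simp only [Finset.mem_filter, Finset.mem_univ, true_and] at hx ⊢
        exact hx.2)).trans (hΔ i)
  have key : ∀ (i : Fin N) (a b : Fin T), a < b → i ∈ Δ a → i ∈ Δ b →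
      (Finset.univ.filter (fun t'' : Fin T => t'' ≤ a ∧ i ∈ Δ t'')).card
        < (Finset.univ.filter (fun t'' : Fin T => t'' ≤ b ∧ i ∈ Δ t'')).card := by
    intro i a b hab hma hmb
    apply Finset.card_lt_card
    rw [Finset.ssubset_iff_of_subset (fun x hx => by
      simp only [Finset.mem_filter, Finset.mem_univ, true_and] at hx ⊢
      exact ⟨hx.1.trans hab.le, hx.2⟩)]
    refine ⟨b, by simp [hmb], ?_⟩
    simp only [Finset.mem_filter, Finset.mem_univ, true_and, not_and]
    intro hba
    exact absurd (lt_of_lt_of_le hab hba) (lt_irrefl a)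
  intro p q h
  simp only [Sum.inr.injEq, Prod.mk.injEq, Fin.mk.injEq] at h
  obtain ⟨⟨t, i⟩, hp⟩ := p
  obtain ⟨⟨t', i'⟩, hq⟩ := q
  simp only at h hp hq
  obtain ⟨hi, hj⟩ := h
  subst hi
  have h1 := bound i t hp
  have h2 := bound i t' hq
  rw [Nat.mod_eq_of_lt (by omega), Nat.mod_eq_of_lt (by omega)] at hj
  have hcard : (Finset.univ.filter (fun t'' : Fin T => t'' ≤ t ∧ i ∈ Δ t'')).card
      = (Finset.univ.filter (fun t'' : Fin T => t'' ≤ t' ∧ i ∈ Δ t'')).card := by omega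
  rcases lt_trichotomy t t' with hlt | heq | hgt
  · exact absurd hcard (Nat.ne_of_lt (key i t t' hlt hp hq))
  · subst heq; rfl
  · exact absurd hcard.symm (Nat.ne_of_lt (key i t' t hgt hq hp))

end Stmt16Aux

open Stmt16Aux

/-- subset Gaussian cloning has an independent Gaussian law.
Given μ ∈ ℝ^N, subsets Δ_1,…,Δ_T of [N] each containing any i at most M times,
i.i.d. Z_i ∼ N(0,1) and G_i^j ∼ N(0,M) all mutually independent (encoded by the
joint law being the product of the marginals), with Ḡ_i = (1/M)Σ_j G_i^j and
b_i^t = #{t' ≤ t : i ∈ Δ_{t'}}, the family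
X_{t,i} = μ_i + Z_i + G_i^{b_i^t} − Ḡ_i (for t ∈ [T] and i ∈ Δ_t)
has joint law the product over pairs (t,i), i ∈ Δ_t, of N(μ_i, M). -/
theorem stmt_16 {Ω : Type*} [MeasurableSpace Ω] (P : Measure Ω) [IsProbabilityMeasure P]
    (N M T : ℕ) (hN : 1 ≤ N) (hM : 0 < M) (hT : 1 ≤ T)
    (μvec : Fin N → ℝ) (Δ : Fin T → Finset (Fin N))
    (hΔ : ∀ i : Fin N, (Finset.univ.filter (fun t => i ∈ Δ t)).card ≤ M)
    (Z : Fin N → Ω → ℝ) (G : Fin N → Fin M → Ω → ℝ)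
    (hlaw : P.map (fun ω => fun idx : Fin N ⊕ (Fin N × Fin M) =>
        Sum.elim (fun i => Z i ω) (fun p => G p.1 p.2 ω) idx) =
      Measure.pi (fun idx : Fin N ⊕ (Fin N × Fin M) =>
        Sum.elim (fun _ => gaussianReal 0 1) (fun _ => gaussianReal 0 (M : NNReal)) idx)) :
    P.map (fun ω => fun p : {q : Fin T × Fin N // q.2 ∈ Δ q.1} =>
        μvec p.1.2 + Z p.1.2 ω +
          G p.1.2
            ⟨((Finset.univ.filter
                (fun t' : Fin T => t' ≤ p.1.1 ∧ p.1.2 ∈ Δ t')).card - 1) % M,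
              Nat.mod_lt _ hM⟩ ω -
          (1 / (M : ℝ)) * ∑ j : Fin M, G p.1.2 j ω) =
      Measure.pi (fun p : {q : Fin T × Fin N // q.2 ∈ Δ q.1} =>
        gaussianReal (μvec p.1.2) (M : NNReal)) := by
  classical
  have hMne : (M : NNReal) ≠ 0 := Nat.cast_ne_zero.mpr hM.ne'
  have hMRne : (M : ℝ) ≠ 0 := Nat.cast_ne_zero.mpr hM.ne'
  set ν : (Fin N ⊕ (Fin N × Fin M)) → Measure ℝ := fun idx =>
    Sum.elim (fun _ => gaussianReal 0 1) (fun _ => gaussianReal 0 (M : NNReal)) idx with hνdef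
  haveI hprob : ∀ idx, IsProbabilityMeasure (ν idx) := fun idx => by
    rcases idx with i | p <;> · simp only [hνdef, Sum.elim_inl, Sum.elim_inr]; infer_instance
  have hpden : ν = fun idx => (volume : Measure ℝ).withDensity (pdfFam N M idx) := by
    funext idx
    rcases idx with i | p
    · exact gaussianReal_of_var_ne_zero 0 one_ne_zero
    · exact gaussianReal_of_var_ne_zero 0 hMne
  have hρmeas : Measurable fun f : (Fin N ⊕ (Fin N × Fin M)) → ℝ =>
      ∏ idx, pdfFam N M idx (f idx) :=
    Finset.measurable_prod _ fun idx _ => (pdfFam_measurable idx).comp (measurable_pi_apply idx)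
  have hpi : Measure.pi ν
      = (volume : Measure ((Fin N ⊕ (Fin N × Fin M)) → ℝ)).withDensity
          (fun f => ∏ idx, pdfFam N M idx (f idx)) := by
    rw [hpden]
    refine pi_withDensity _ pdfFam_measurable (fun idx => ?_)
    rcases idx with i | p
    · rw [show pdfFam N M (Sum.inl i) = gaussianPDF 0 1 from rfl,
        ← gaussianReal_of_var_ne_zero 0 one_ne_zero]
      infer_instance
    · rw [show pdfFam N M (Sum.inr p) = gaussianPDF 0 (M : NNReal) from rfl,
        ← gaussianReal_of_var_ne_zero 0 hMne]
      infer_instance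
  have hsigma_pres : (Measure.pi ν).map (sigmaFun N M) = Measure.pi ν := by
    rw [hpi, map_withDensity_of_involutive (sigmaFun_involutive hM) sigmaFun_measurable
      (sigmaFun_map_volume hM) _ hρmeas]
    congr 1
    funext f
    exact rho_invariant hM f
  set Φ : Ω → (Fin N ⊕ (Fin N × Fin M)) → ℝ := fun ω => fun idx =>
    Sum.elim (fun i => Z i ω) (fun p => G p.1 p.2 ω) idx with hΦdef
  have hΦ : AEMeasurable Φ P := by
    by_contra h
    rw [Measure.map_of_not_aemeasurable h] at hlaw
    have h0 := congrArg (fun m : Measure ((Fin N ⊕ (Fin N × Fin M)) → ℝ) => m Set.univ) hlaw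
    simp only [Measure.coe_zero, Pi.zero_apply, measure_univ] at h0
    exact zero_ne_one h0
  set e : {q : Fin T × Fin N // q.2 ∈ Δ q.1} → (Fin N ⊕ (Fin N × Fin M)) :=
    fun p => Sum.inr (p.1.2, (⟨((Finset.univ.filter
        (fun t' : Fin T => t' ≤ p.1.1 ∧ p.1.2 ∈ Δ t')).card - 1) % M,
      Nat.mod_lt _ hM⟩ : Fin M)) with hedef
  have he : Function.Injective e := e_injective hM Δ hΔ
  set A : ((Fin N ⊕ (Fin N × Fin M)) → ℝ) → ({q : Fin T × Fin N // q.2 ∈ Δ q.1} → ℝ) :=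
    fun f p => μvec p.1.2 + f (e p) with hAdef
  have hA : Measurable A := measurable_pi_lambda _ fun p => (measurable_pi_apply _).const_add _
  have hfactor : (fun ω => fun p : {q : Fin T × Fin N // q.2 ∈ Δ q.1} =>
        μvec p.1.2 + Z p.1.2 ω +
          G p.1.2
            ⟨((Finset.univ.filter
                (fun t' : Fin T => t' ≤ p.1.1 ∧ p.1.2 ∈ Δ t')).card - 1) % M,
              Nat.mod_lt _ hM⟩ ω -
          (1 / (M : ℝ)) * ∑ j : Fin M, G p.1.2 j ω)
      = (A ∘ sigmaFun N M) ∘ Φ := by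
    funext ω p
    simp only [Function.comp_apply, hAdef, hedef, sigmaFun_inr, hΦdef, Sum.elim_inr, Sum.elim_inl]
    field_simp
    ring
  rw [hfactor, ← AEMeasurable.map_map_of_aemeasurable
    ((hA.comp sigmaFun_measurable).aemeasurable) hΦ, hlaw,
    ← Measure.map_map hA sigmaFun_measurable, hsigma_pres,
    pi_map_eval ν e he (fun p => μvec p.1.2)]
  congr 1
  funext p
  rw [show ν (e p) = gaussianReal 0 (M : NNReal) from rfl, gaussianReal_map_const_add, zero_add]
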